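/- Let (Ω, 𝔽, ℙ) be a probability space and let n₁, n₂ : Ω → ℂ be independent, integrable-square complex random variables with E[n₁] = 0, E[n₂] = 0, E[|n₁|²] = P·(1 − τ_γ) and E[|n₂|²] = |α|²·P·(1 − τ_α), where P > 0, τ_α, τ_γ ∈ [0, 1], α ∈ ℂ and θ ∈ ℝ. Then E[|√τ_α · α·e^{iθ} · n₁ + n₂|²] = P·|α|²·(1 − τ_α·τ_γ). -/

import Mathlib

open MeasureTheory ProbabilityTheory

/-- Lemma 1 core computation: if `n₁, n₂` are independent zero-mean square-integrable
complex noises with `E[|n₁|²] = P(1 − τ_γ)` and `E[|n₂|²] = |α|²P(1 − τ_α)`, then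
`E[|√τ_α·α·e^{iθ}·n₁ + n₂|²] = P·|α|²·(1 − τ_α·τ_γ)`. -/
theorem stmt_10 {Ω : Type*} [MeasureSpace Ω]
    [IsProbabilityMeasure (ℙ : Measure Ω)]
    (n₁ n₂ : Ω → ℂ) (hindep : IndepFun n₁ n₂)
    (hn₁ : MemLp n₁ 2) (hn₂ : MemLp n₂ 2)
    (P τα τγ : ℝ) (hP : 0 < P) (hτα : τα ∈ Set.Icc (0 : ℝ) 1)
    (hτγ : τγ ∈ Set.Icc (0 : ℝ) 1) (α : ℂ) (θ : ℝ)
    (hmean₁ : ∫ ω, n₁ ω = 0) (hmean₂ : ∫ ω, n₂ ω = 0)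
    (hvar₁ : ∫ ω, ‖n₁ ω‖ ^ 2 = P * (1 - τγ))
    (hvar₂ : ∫ ω, ‖n₂ ω‖ ^ 2 = ‖α‖ ^ 2 * P * (1 - τα)) :
    ∫ ω, ‖(Real.sqrt τα : ℂ) * (α * Complex.exp (θ * Complex.I)) * n₁ ω
        + n₂ ω‖ ^ 2 =
      P * ‖α‖ ^ 2 * (1 - τα * τγ) := by
  obtain ⟨hτα0, hτα1⟩ := hτα
  set c : ℂ := (Real.sqrt τα : ℂ) * (α * Complex.exp (θ * Complex.I)) with hc
  have hcabs : ‖c‖ ^ 2 = τα * ‖α‖ ^ 2 := by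
    rw [hc]
    simp [norm_mul, Complex.norm_exp, mul_pow, Complex.norm_real,
      abs_of_nonneg (Real.sqrt_nonneg τα), Real.sq_sqrt hτα0]
  -- square integrable of c * n₁
  have hz : MemLp (fun ω => c * n₁ ω) 2 := hn₁.const_mul c
  have hcz : Integrable (fun ω => c * n₁ ω) := hz.integrable one_le_two
  have hn₂i : Integrable n₂ := hn₂.integrable one_le_two
  -- integrability of squared norms
  have hsq : ∀ (f : Ω → ℂ), MemLp f 2 →
      Integrable (fun ω => ‖f ω‖ ^ 2) := by
    intro f hf
    have := hf.integrable_norm_rpow two_ne_zero ENNReal.ofNat_ne_top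
    simpa [ENNReal.toReal_ofNat, Real.rpow_natCast] using this
  have hN1 : Integrable (fun ω => ‖n₁ ω‖ ^ 2) := hsq n₁ hn₁
  have hN2 : Integrable (fun ω => ‖n₂ ω‖ ^ 2) := hsq n₂ hn₂
  -- component functions
  set A : Ω → ℝ := fun ω => (c * n₁ ω).re with hA
  set B : Ω → ℝ := fun ω => (c * n₁ ω).im with hB
  set U : Ω → ℝ := fun ω => (n₂ ω).re with hU
  set V : Ω → ℝ := fun ω => (n₂ ω).im with hV
  have hAi : Integrable A := by simpa [hA] using hcz.re
  have hBi : Integrable B := by simpa [hB] using hcz.im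
  have hUi : Integrable U := by simpa [hU] using hn₂i.re
  have hVi : Integrable V := by simpa [hV] using hn₂i.im
  have hmre : Measurable fun x : ℂ => (c * x).re :=
    Complex.measurable_re.comp (measurable_const_mul c)
  have hmim : Measurable fun x : ℂ => (c * x).im :=
    Complex.measurable_im.comp (measurable_const_mul c)
  have hAU : IndepFun A U := hindep.comp hmre Complex.measurable_re
  have hBV : IndepFun B V := hindep.comp hmim Complex.measurable_im
  have hAUi : Integrable (A * U) := hAU.integrable_mul hAi hUi
  have hBVi : Integrable (B * V) := hBV.integrable_mul hBi hVi
  -- zero means of components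
  have hz0 : ∫ ω, c * n₁ ω = 0 := by rw [integral_const_mul, hmean₁, mul_zero]
  have hA0 : ∫ ω, A ω = 0 := by
    have := integral_re (μ := (ℙ : Measure Ω)) hcz
    simp only [hz0, Complex.zero_re] at this
    simpa [hA] using this
  have hU0 : ∫ ω, U ω = 0 := by
    have := integral_re (μ := (ℙ : Measure Ω)) hn₂i
    simp only [hmean₂, Complex.zero_re] at this
    simpa [hU] using this
  have hAU0 : ∫ ω, A ω * U ω = 0 := by
    have h := hAU.integral_mul_eq_mul_integral hAi.1 hUi.1
    have h2 : ∫ ω, A ω * U ω = (∫ ω, A ω) * ∫ ω, U ω := h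
    rw [h2, hA0, hU0, mul_zero]
  have hBV0 : ∫ ω, B ω * V ω = 0 := by
    have hB0 : ∫ ω, B ω = 0 := by
      have := integral_im (μ := (ℙ : Measure Ω)) hcz
      simp only [hz0, Complex.zero_im] at this
      simpa [hB] using this
    have h := hBV.integral_mul_eq_mul_integral hBi.1 hVi.1
    have h2 : ∫ ω, B ω * V ω = (∫ ω, B ω) * ∫ ω, V ω := h
    rw [h2, hB0, zero_mul]
  -- pointwise expansion
  have hpt : ∀ ω, ‖c * n₁ ω + n₂ ω‖ ^ 2 =
      ‖c‖ ^ 2 * ‖n₁ ω‖ ^ 2 + ‖n₂ ω‖ ^ 2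
        + 2 * (A ω * U ω + B ω * V ω) := by
    intro ω
    have h1 : ‖c * n₁ ω + n₂ ω‖ ^ 2 = Complex.normSq (c * n₁ ω + n₂ ω) :=
      Complex.sq_norm _
    rw [h1, Complex.normSq_add, Complex.normSq_mul]
    simp only [Complex.normSq_eq_norm_sq, hA, hB, hU, hV, Complex.mul_re,
      Complex.conj_re, Complex.conj_im]
    ring
  calc ∫ ω, ‖c * n₁ ω + n₂ ω‖ ^ 2
      = ∫ ω, (‖c‖ ^ 2 * ‖n₁ ω‖ ^ 2 + ‖n₂ ω‖ ^ 2
          + 2 * (A ω * U ω + B ω * V ω)) := by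
        exact integral_congr_ae (Filter.Eventually.of_forall hpt)
    _ = ‖c‖ ^ 2 * (∫ ω, ‖n₁ ω‖ ^ 2) + (∫ ω, ‖n₂ ω‖ ^ 2)
          + 2 * ((∫ ω, A ω * U ω) + ∫ ω, B ω * V ω) := by
        have hI1 : Integrable (fun ω => ‖c‖ ^ 2 * ‖n₁ ω‖ ^ 2) :=
          hN1.const_mul _
        have hIc : Integrable (fun ω => A ω * U ω) := hAUi
        have hId : Integrable (fun ω => B ω * V ω) := hBVi
        have hS1 : Integrable (fun ω => ‖c‖ ^ 2 * ‖n₁ ω‖ ^ 2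
            + ‖n₂ ω‖ ^ 2) := hI1.add hN2
        have hS2 : Integrable (fun ω => 2 * (A ω * U ω + B ω * V ω)) :=
          (hIc.add hId).const_mul 2
        rw [integral_add hS1 hS2, integral_add hI1 hN2, integral_const_mul, integral_const_mul,
          integral_add hIc hId]
    _ = P * ‖α‖ ^ 2 * (1 - τα * τγ) := by
        rw [hvar₁, hvar₂, hAU0, hBV0, hcabs]
        ring
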